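/- Let X be the 5-element poset {a, b, c, g, h} with a < c, b < c, c < g, c < h. There is no bijection φ from the vertices of O(X) to the vertices of C(X) such that two vertices of O(X) are adjacent (joined by an edge) if and only if their images under φ are adjacent in C(X); i.e., the 1-skeletons of O(X) and C(X) are not isomorphic as graphs. -/

import Mathlib

/-- Indicator vector of a subset `W` of `P` in `ℝ^P`. -/
noncomputable def rho {P : Type*} (W : Set P) : P → ℝ := W.indicator fun _ => 1

/-- The order polytope of a finite poset `P`. -/
def orderPolytope (P : Type*) [Fintype P] [PartialOrder P] : Set (P → ℝ) :=
  {f | (∀ i, 0 ≤ f i ∧ f i ≤ 1) ∧ ∀ i j : P, i ≤ j → f j ≤ f i}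

/-- The chain polytope of a finite poset `P`. -/
def chainPolytope (P : Type*) [Fintype P] [PartialOrder P] : Set (P → ℝ) :=
  {f | (∀ i, 0 ≤ f i) ∧ ∀ C : Finset P, IsMaxChain (· ≤ ·) (C : Set P) → ∑ i ∈ C, f i ≤ 1}

/-- A subset `S` of a poset `P` is connected in `P` if any two of its elements are
joined by a sequence within `S` whose consecutive members are comparable in `P`. -/
def ConnIn {P : Type*} [PartialOrder P] (S : Set P) : Prop :=
  ∀ x ∈ S, ∀ y ∈ S,
    Relation.ReflTransGen (fun u v => u ∈ S ∧ v ∈ S ∧ (u ≤ v ∨ v ≤ u)) x y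

/-- The segment joining `u` and `v` is an edge (one-dimensional face) of `S`. -/
def IsEdgeOf {E : Type*} [AddCommGroup E] [Module ℝ E] (S : Set E) (u v : E) : Prop :=
  u ≠ v ∧ IsExtreme ℝ S (segment ℝ u v)

/-- The set of maximal elements of a subset of a poset. -/
def maxSet {P : Type*} [PartialOrder P] (S : Set P) : Set P :=
  {x | x ∈ S ∧ ∀ y ∈ S, x ≤ y → x = y}

/-- The set of minimal elements of a subset of a poset. -/
def minSet {P : Type*} [PartialOrder P] (S : Set P) : Set P :=
  {x | x ∈ S ∧ ∀ y ∈ S, y ≤ x → x = y}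

/-- The 1-skeleton of the order polytope, combinatorially: vertices are poset
ideals, adjacency is proper inclusion with connected difference. -/
def orderSkeleton (P : Type*) [PartialOrder P] :
    SimpleGraph {I : Set P // IsLowerSet I} :=
  SimpleGraph.fromRel fun I J => I.1 ⊂ J.1 ∧ ConnIn (J.1 \ I.1)

/-- The 1-skeleton of the chain polytope, combinatorially: vertices are antichains,
adjacency is connectedness of the symmetric difference. -/
def chainSkeleton (P : Type*) [PartialOrder P] :
    SimpleGraph {A : Set P // IsAntichain (· ≤ ·) A} :=
  SimpleGraph.fromRel fun A B => ConnIn ((A.1 \ B.1) ∪ (B.1 \ A.1))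

/-- The multiset of vertex degrees of a graph (the degree sequence, up to order). -/
noncomputable def degMultiset {V : Type*} [Fintype V] (G : SimpleGraph V) : Multiset ℕ :=
  Finset.univ.val.map fun v => (G.neighborSet v).ncard

/-- `P` contains the poset `X = {a,b,c,g,h}` with `a<c, b<c, c<g, c<h` as a subposet. -/
def ContainsX (P : Type*) [PartialOrder P] : Prop :=
  ∃ a b c g h : P, a < c ∧ b < c ∧ c < g ∧ c < h ∧
    ¬ a ≤ b ∧ ¬ b ≤ a ∧ ¬ g ≤ h ∧ ¬ h ≤ g

/-- The pair `(I, J)` of poset ideals with `I ⊂ J` and `J \ I` connected in `P`. -/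
def OmegaP {P : Type*} [PartialOrder P] (I J : Set P) : Prop :=
  IsLowerSet I ∧ IsLowerSet J ∧ I ⊂ J ∧ ConnIn (J \ I)

/-- The pair `(A, B)` of distinct antichains with connected symmetric difference. -/
def PsiP {P : Type*} [PartialOrder P] (A B : Set P) : Prop :=
  IsAntichain (· ≤ ·) A ∧ IsAntichain (· ≤ ·) B ∧ A ≠ B ∧ ConnIn ((A \ B) ∪ (B \ A))

/-- First component of the map `Ω → Ψ`: `A = max J`. -/
def FmapA {P : Type*} [PartialOrder P] (_I J : Set P) : Set P := maxSet J

/-- Second component of the map `Ω → Ψ`: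
`B = min(J \ I) ∪ (max I ∩ max J)`, with `min(J \ I) := ∅` when `|J \ I| = 1`. -/
def FmapB {P : Type*} [PartialOrder P] (I J : Set P) : Set P :=
  (if (J \ I).ncard = 1 then ∅ else minSet (J \ I)) ∪ (maxSet I ∩ maxSet J)

noncomputable instance {P : Type*} [Fintype P] [PartialOrder P] :
    Fintype {I : Set P // IsLowerSet I} := Fintype.ofFinite _

noncomputable instance {P : Type*} [Fintype P] [PartialOrder P] :
    Fintype {A : Set P // IsAntichain (· ≤ ·) A} := Fintype.ofFinite _

/-- The five-element poset `X = {a,b,c,g,h}` with `a<c, b<c, c<g, c<h`. -/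
inductive XP | a | b | c | g | h
deriving DecidableEq

instance : Fintype XP :=
  ⟨{.a, .b, .c, .g, .h}, fun x => by cases x <;> simp⟩

/-- The order relation of `X`. -/
def XP.leB : XP → XP → Bool
  | .a, .a => true | .a, .c => true | .a, .g => true | .a, .h => true
  | .b, .b => true | .b, .c => true | .b, .g => true | .b, .h => true
  | .c, .c => true | .c, .g => true | .c, .h => true
  | .g, .g => true | .h, .h => true
  | _, _ => false

instance : LE XP := ⟨fun x y => XP.leB x y = true⟩

instance : DecidableRel (· ≤ · : XP → XP → Prop) :=
  fun x y => inferInstanceAs (Decidable (XP.leB x y = true))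

instance : PartialOrder XP where
  le_refl := by decide
  le_trans := by decide
  le_antisymm := by decide

/-! ### Auxiliary lemmas -/

/-- Any subset of `XP` containing `c` is connected, since `c` is comparable to everything. -/
lemma connIn_of_c_mem {S : Set XP} (hc : XP.c ∈ S) : ConnIn S := by
  intro x hx y hy
  have h1 : ∀ z : XP, z ≤ XP.c ∨ XP.c ≤ z := by decide
  exact Relation.ReflTransGen.trans
    (Relation.ReflTransGen.single ⟨hx, hc, h1 x⟩)
    (Relation.ReflTransGen.single ⟨hc, hy, (h1 y).symm⟩)

/-- A two-element set consisting of incomparable elements is not connected. -/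
lemma not_connIn_pair {x y : XP} (hxy : x ≠ y) (h1 : ¬ x ≤ y) (h2 : ¬ y ≤ x) :
    ¬ ConnIn ({x, y} : Set XP) := by
  intro h
  have hx : x ∈ ({x, y} : Set XP) := Set.mem_insert _ _
  have hy : y ∈ ({x, y} : Set XP) := Set.mem_insert_iff.2 (Or.inr rfl)
  have hreach := h x hx y hy
  have key : ∀ z, Relation.ReflTransGen
      (fun u v => u ∈ ({x, y} : Set XP) ∧ v ∈ ({x, y} : Set XP) ∧ (u ≤ v ∨ v ≤ u)) x z →
      z = x := by
    intro z hz
    induction hz with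
    | refl => rfl
    | @tail b z hab hbz ih =>
      obtain ⟨hu, hv, hcomp⟩ := hbz
      subst ih
      rcases hv with hv | hv
      · exact hv
      · rcases hv with rfl
        exact absurd hcomp (by push_neg; exact ⟨h1, h2⟩)
  exact hxy ((key y hreach).symm)

/-- The only antichain of `XP` containing `c` is `{c}`. -/
lemma antichain_c_mem {A : Set XP} (hA : IsAntichain (· ≤ ·) A) (hc : XP.c ∈ A) :
    A = {XP.c} := by
  ext x
  simp only [Set.mem_singleton_iff]
  constructor
  · intro hx
    by_contra hne
    have hcomp : x ≤ XP.c ∨ XP.c ≤ x := by cases x <;> decide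
    rcases hcomp with h | h
    · exact hA hx hc hne h
    · exact hA hc hx (Ne.symm hne) h
  · rintro rfl; exact hc

lemma anti_singleton_c : IsAntichain (· ≤ ·) ({XP.c} : Set XP) := by
  intro x hx y hy hne
  simp only [Set.mem_singleton_iff] at hx hy
  subst hx; subst hy; exact absurd rfl hne

/-- Enumeration of the lower sets of `XP`. -/
lemma lowerSet_cases (I : Set XP) (hI : IsLowerSet I) :
    I = ∅ ∨ I = {XP.a} ∨ I = {XP.b} ∨ I = {XP.a, XP.b} ∨
    I = {XP.a, XP.b, XP.c} ∨ I = {XP.a, XP.b, XP.c, XP.g} ∨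
    I = {XP.a, XP.b, XP.c, XP.h} ∨ I = Set.univ := by
  classical
  by_cases hc : XP.c ∈ I
  · have ha : XP.a ∈ I := hI (show XP.a ≤ XP.c by decide) hc
    have hb : XP.b ∈ I := hI (show XP.b ≤ XP.c by decide) hc
    by_cases hg : XP.g ∈ I <;> by_cases hh : XP.h ∈ I
    · exact Or.inr (Or.inr (Or.inr (Or.inr (Or.inr (Or.inr (Or.inr
        (Set.eq_univ_of_forall fun x => by cases x <;> assumption)))))))
    · refine Or.inr (Or.inr (Or.inr (Or.inr (Or.inr (Or.inl ?_)))))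
      ext x; cases x <;> simp [ha, hb, hc, hg, hh]
    · refine Or.inr (Or.inr (Or.inr (Or.inr (Or.inr (Or.inr (Or.inl ?_))))))
      ext x; cases x <;> simp [ha, hb, hc, hg, hh]
    · refine Or.inr (Or.inr (Or.inr (Or.inr (Or.inl ?_))))
      ext x; cases x <;> simp [ha, hb, hc, hg, hh]
  · have hg : XP.g ∉ I := fun hg => hc (hI (show XP.c ≤ XP.g by decide) hg)
    have hh : XP.h ∉ I := fun hh => hc (hI (show XP.c ≤ XP.h by decide) hh)
    by_cases ha : XP.a ∈ I <;> by_cases hb : XP.b ∈ I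
    · refine Or.inr (Or.inr (Or.inr (Or.inl ?_)))
      ext x; cases x <;> simp [ha, hb, hc, hg, hh]
    · refine Or.inr (Or.inl ?_)
      ext x; cases x <;> simp [ha, hb, hc, hg, hh]
    · refine Or.inr (Or.inr (Or.inl ?_))
      ext x; cases x <;> simp [ha, hb, hc, hg, hh]
    · refine Or.inl ?_
      ext x; cases x <;> simp [ha, hb, hc, hg, hh]

/-- Lower-set proofs for the partners. -/
lemma LS_empty : IsLowerSet (∅ : Set XP) := isLowerSet_empty
lemma LS_a : IsLowerSet ({XP.a} : Set XP) := by
  intro u v h hu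
  simp only [Set.mem_singleton_iff] at hu ⊢
  rcases hu with rfl
  revert h; cases v <;> decide
lemma LS_b : IsLowerSet ({XP.b} : Set XP) := by
  intro u v h hu
  simp only [Set.mem_singleton_iff] at hu ⊢
  rcases hu with rfl
  revert h; cases v <;> decide
lemma LS_ab : IsLowerSet ({XP.a, XP.b} : Set XP) := by
  intro u v h hu
  simp only [Set.mem_insert_iff, Set.mem_singleton_iff] at hu ⊢
  rcases hu with rfl | rfl <;> revert h <;> cases v <;> decide
lemma LS_abc : IsLowerSet ({XP.a, XP.b, XP.c} : Set XP) := by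
  intro u v h hu
  simp only [Set.mem_insert_iff, Set.mem_singleton_iff] at hu ⊢
  rcases hu with rfl | rfl | rfl <;> revert h <;> cases v <;> decide
lemma LS_abcg : IsLowerSet ({XP.a, XP.b, XP.c, XP.g} : Set XP) := by
  intro u v h hu
  simp only [Set.mem_insert_iff, Set.mem_singleton_iff] at hu ⊢
  rcases hu with rfl | rfl | rfl | rfl <;> revert h <;> cases v <;> decide
lemma LS_abch : IsLowerSet ({XP.a, XP.b, XP.c, XP.h} : Set XP) := by
  intro u v h hu
  simp only [Set.mem_insert_iff, Set.mem_singleton_iff] at hu ⊢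
  rcases hu with rfl | rfl | rfl | rfl <;> revert h <;> cases v <;> decide
lemma LS_univ : IsLowerSet (Set.univ : Set XP) := isLowerSet_univ

/-- Every lower set of `XP` has a non-neighbor in the order skeleton. -/
lemma order_not_univ (v : {I : Set XP // IsLowerSet I}) :
    ∃ w : {I : Set XP // IsLowerSet I}, w ≠ v ∧ ¬ (orderSkeleton XP).Adj v w := by
  have hne_ab : ¬ ConnIn ({XP.a, XP.b} : Set XP) :=
    not_connIn_pair (by decide) (by decide) (by decide)
  have hne_gh : ¬ ConnIn ({XP.g, XP.h} : Set XP) :=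
    not_connIn_pair (by decide) (by decide) (by decide)
  rcases lowerSet_cases v.1 v.2 with h | h | h | h | h | h | h | h
  · -- v = ∅, partner {a,b}
    refine ⟨⟨{XP.a, XP.b}, LS_ab⟩, ?_, ?_⟩
    · intro hw; rw [← hw] at h; simp only at h
      have := h ▸ (Set.mem_insert XP.a {XP.b})
      exact this
    · rw [orderSkeleton, SimpleGraph.fromRel_adj]
      rintro ⟨-, hrel | hrel⟩
      · have := hrel.2
        rw [h, Set.diff_empty] at this
        exact hne_ab this
      · have := hrel.1.1 (Set.mem_insert XP.a {XP.b})
        rw [h] at this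
        exact this
  · -- v = {a}, partner {b}
    refine ⟨⟨{XP.b}, LS_b⟩, ?_, ?_⟩
    · intro hw
      have : XP.b ∈ v.1 := by rw [← hw]; exact Set.mem_singleton _
      rw [h] at this; simp at this
    · rw [orderSkeleton, SimpleGraph.fromRel_adj]
      rintro ⟨-, hrel | hrel⟩
      · have := hrel.1.1 (show XP.a ∈ v.1 by rw [h]; exact Set.mem_singleton _)
        simp at this
      · have := hrel.1.1 (show XP.b ∈ ({XP.b} : Set XP) from Set.mem_singleton _)
        rw [h] at this; simp at this
  · -- v = {b}, partner {a}
    refine ⟨⟨{XP.a}, LS_a⟩, ?_, ?_⟩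
    · intro hw
      have : XP.a ∈ v.1 := by rw [← hw]; exact Set.mem_singleton _
      rw [h] at this; simp at this
    · rw [orderSkeleton, SimpleGraph.fromRel_adj]
      rintro ⟨-, hrel | hrel⟩
      · have := hrel.1.1 (show XP.b ∈ v.1 by rw [h]; exact Set.mem_singleton _)
        simp at this
      · have := hrel.1.1 (show XP.a ∈ ({XP.a} : Set XP) from Set.mem_singleton _)
        rw [h] at this; simp at this
  · -- v = {a,b}, partner ∅
    refine ⟨⟨∅, LS_empty⟩, ?_, ?_⟩
    · intro hw
      have : XP.a ∈ v.1 := by rw [h]; exact Set.mem_insert _ _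
      rw [← hw] at this; exact this
    · rw [orderSkeleton, SimpleGraph.fromRel_adj]
      rintro ⟨-, hrel | hrel⟩
      · have := hrel.1.1 (show XP.a ∈ v.1 by rw [h]; exact Set.mem_insert _ _)
        exact this
      · have := hrel.2
        rw [h, Set.diff_empty] at this
        exact hne_ab this
  · -- v = {a,b,c}, partner univ
    refine ⟨⟨Set.univ, LS_univ⟩, ?_, ?_⟩
    · intro hw
      have : XP.g ∈ v.1 := by rw [← hw]; trivial
      rw [h] at this; simp at this
    · rw [orderSkeleton, SimpleGraph.fromRel_adj]
      rintro ⟨-, hrel | hrel⟩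
      · have hdiff : (Set.univ : Set XP) \ v.1 = {XP.g, XP.h} := by
          rw [h]; ext x; cases x <;> simp
        have := hrel.2
        rw [hdiff] at this
        exact hne_gh this
      · have := hrel.1.1 (show XP.g ∈ (Set.univ : Set XP) from trivial)
        rw [h] at this; simp at this
  · -- v = {a,b,c,g}, partner {a,b,c,h}
    refine ⟨⟨{XP.a, XP.b, XP.c, XP.h}, LS_abch⟩, ?_, ?_⟩
    · intro hw
      have : XP.h ∈ v.1 := by rw [← hw]; simp
      rw [h] at this; simp at this
    · rw [orderSkeleton, SimpleGraph.fromRel_adj]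
      rintro ⟨-, hrel | hrel⟩
      · have := hrel.1.1 (show XP.g ∈ v.1 by rw [h]; simp)
        simp at this
      · have := hrel.1.1 (show XP.h ∈ ({XP.a, XP.b, XP.c, XP.h} : Set XP) by simp)
        rw [h] at this; simp at this
  · -- v = {a,b,c,h}, partner {a,b,c,g}
    refine ⟨⟨{XP.a, XP.b, XP.c, XP.g}, LS_abcg⟩, ?_, ?_⟩
    · intro hw
      have : XP.g ∈ v.1 := by rw [← hw]; simp
      rw [h] at this; simp at this
    · rw [orderSkeleton, SimpleGraph.fromRel_adj]
      rintro ⟨-, hrel | hrel⟩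
      · have := hrel.1.1 (show XP.h ∈ v.1 by rw [h]; simp)
        simp at this
      · have := hrel.1.1 (show XP.g ∈ ({XP.a, XP.b, XP.c, XP.g} : Set XP) by simp)
        rw [h] at this; simp at this
  · -- v = univ, partner {a,b,c}
    refine ⟨⟨{XP.a, XP.b, XP.c}, LS_abc⟩, ?_, ?_⟩
    · intro hw
      have h2 : ({XP.a, XP.b, XP.c} : Set XP) = Set.univ := by
        have h3 := congrArg Subtype.val hw
        rw [h] at h3; exact h3
      have : XP.g ∈ ({XP.a, XP.b, XP.c} : Set XP) := h2 ▸ Set.mem_univ XP.g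
      simp at this
    · rw [orderSkeleton, SimpleGraph.fromRel_adj]
      rintro ⟨-, hrel | hrel⟩
      · have := hrel.1.1 (show XP.g ∈ v.1 by rw [h]; trivial)
        simp at this
      · have hdiff : v.1 \ ({XP.a, XP.b, XP.c} : Set XP) = {XP.g, XP.h} := by
          rw [h]; ext x; cases x <;> simp
        have := hrel.2
        rw [hdiff] at this
        exact hne_gh this

/-- The vertex `{c}` is universal in the chain skeleton. -/
lemma chain_c_univ (w : {A : Set XP // IsAntichain (· ≤ ·) A})
    (hw : w ≠ ⟨{XP.c}, anti_singleton_c⟩) :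
    (chainSkeleton XP).Adj ⟨{XP.c}, anti_singleton_c⟩ w := by
  have hcw : XP.c ∉ w.1 := fun hmem => hw (Subtype.ext (antichain_c_mem w.2 hmem))
  rw [chainSkeleton, SimpleGraph.fromRel_adj]
  refine ⟨Ne.symm hw, Or.inl ?_⟩
  exact connIn_of_c_mem (Set.mem_union_left _ ⟨Set.mem_singleton _, hcw⟩)

theorem stmt17 : IsEmpty (orderSkeleton XP ≃g chainSkeleton XP) := by
  constructor
  intro f
  set c0 : {A : Set XP // IsAntichain (· ≤ ·) A} := ⟨{XP.c}, anti_singleton_c⟩ with hc0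
  obtain ⟨w, hw_ne, hw_nadj⟩ := order_not_univ (f.symm c0)
  have hfw : f w ≠ c0 := by
    intro hfw
    apply hw_ne
    rw [← hfw, RelIso.symm_apply_apply]
  have hadj : (chainSkeleton XP).Adj c0 (f w) := chain_c_univ (f w) hfw
  apply hw_nadj
  have : (chainSkeleton XP).Adj (f (f.symm c0)) (f w) := by
    rwa [RelIso.apply_symm_apply]
  exact f.map_adj_iff.1 this
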